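/- Let A : H → 2^H with M = C C* an admissible preconditioner with closed range such that M⁻¹A is M-monotone. Then C* ▷ A = (C* A⁻¹ C)⁻¹ is maximal monotone on D and its resolvent satisfies (I + C* A⁻¹ C)⁻¹ = C* (M + A)⁻¹ C; in particular this resolvent is everywhere defined, single-valued and firmly nonexpansive on D. -/

import Mathlib

/-- `C* ▷ A` is maximal monotone and its resolvent is `C* (M+A)⁻¹ C`, which is hence
everywhere defined, single-valued and firmly nonexpansive on `D`. -/
theorem stmt10 {H D : Type} [NormedAddCommGroup H] [InnerProductSpace ℝ H] [CompleteSpace H]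
    [NormedAddCommGroup D] [InnerProductSpace ℝ D] [CompleteSpace D]
    (A : Set (H × H)) (M : H →L[ℝ] H) (C : D →L[ℝ] H)
    (hC : Function.Injective C)
    (hCsurj : Function.Surjective (ContinuousLinearMap.adjoint C))
    (hM : M = C ∘L (ContinuousLinearMap.adjoint C))
    -- `J = (M+A)⁻¹`, single-valued with full domain (admissibility)
    (J : H → H)
    (hJ : ∀ v : H, (J v, v - M (J v)) ∈ A)
    (hJuniq : ∀ v w : H, (w, v - M w) ∈ A → w = J v)
    -- `M⁻¹A` is `M`-monotone
    (hmono : ∀ u v u' v' : H, (u, M v) ∈ A → (u', M v') ∈ A →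
        0 ≤ (inner ℝ (M (v - v')) (u - u') : ℝ))
    -- the graph of `C* ▷ A = (C* A⁻¹ C)⁻¹`
    (CA : Set (D × D))
    (hCA : CA = {p : D × D | ∃ x : H, (x, C p.2) ∈ A ∧
        p.1 = (ContinuousLinearMap.adjoint C) x}) :
    -- monotone
    (∀ p ∈ CA, ∀ q ∈ CA, 0 ≤ (inner ℝ (p.2 - q.2) (p.1 - q.1) : ℝ)) ∧
    -- maximal
    (∀ p : D × D, (∀ q ∈ CA, 0 ≤ (inner ℝ (p.2 - q.2) (p.1 - q.1) : ℝ)) → p ∈ CA) ∧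
    -- the resolvent `(I + C* ▷ A)⁻¹` coincides with `C* (M+A)⁻¹ C`
    (∀ w p : D, (p, w - p) ∈ CA ↔ p = (ContinuousLinearMap.adjoint C) (J (C w))) ∧
    -- firm nonexpansiveness of this resolvent
    (∀ w₁ w₂ : D,
      ‖(ContinuousLinearMap.adjoint C) (J (C w₁)) - (ContinuousLinearMap.adjoint C) (J (C w₂))‖ ^ 2
        + ‖(w₁ - (ContinuousLinearMap.adjoint C) (J (C w₁)))
            - (w₂ - (ContinuousLinearMap.adjoint C) (J (C w₂)))‖ ^ 2
      ≤ ‖w₁ - w₂‖ ^ 2) := by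
  subst hM
  have hmem : ∀ p : D × D, p ∈ CA ↔ ∃ x : H, (x, C p.2) ∈ A ∧
      p.1 = (ContinuousLinearMap.adjoint C) x := by
    intro p; rw [hCA]; exact Iff.rfl
  -- monotonicity
  have mono : ∀ p ∈ CA, ∀ q ∈ CA, 0 ≤ (inner ℝ (p.2 - q.2) (p.1 - q.1) : ℝ) := by
    intro p hp q hq
    obtain ⟨x, hx, hp1⟩ := (hmem p).1 hp
    obtain ⟨x', hx', hq1⟩ := (hmem q).1 hq
    obtain ⟨v, hv⟩ := hCsurj p.2
    obtain ⟨v', hv'⟩ := hCsurj q.2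
    have h1 : (x, (C ∘L ContinuousLinearMap.adjoint C) v) ∈ A := by
      simpa [ContinuousLinearMap.comp_apply, hv] using hx
    have h2 : (x', (C ∘L ContinuousLinearMap.adjoint C) v') ∈ A := by
      simpa [ContinuousLinearMap.comp_apply, hv'] using hx'
    have hmm := hmono x v x' v' h1 h2
    have key : (inner ℝ ((C ∘L ContinuousLinearMap.adjoint C) (v - v')) (x - x') : ℝ)
        = inner ℝ (p.2 - q.2) (p.1 - q.1) := by
      rw [hp1, hq1]
      have e1 : (C ∘L ContinuousLinearMap.adjoint C) (v - v') = C (p.2 - q.2) := by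
        simp [ContinuousLinearMap.comp_apply, map_sub, hv, hv']
      have e2 : (ContinuousLinearMap.adjoint C) x - (ContinuousLinearMap.adjoint C) x'
          = (ContinuousLinearMap.adjoint C) (x - x') := (map_sub _ _ _).symm
      rw [e1, e2, ContinuousLinearMap.adjoint_inner_right]
    linarith [key ▸ hmm]
  -- resolvent identity
  have res : ∀ w p : D, (p, w - p) ∈ CA ↔ p = (ContinuousLinearMap.adjoint C) (J (C w)) := by
    intro w p
    rw [hmem]
    constructor
    · rintro ⟨x, hx, hp⟩
      have hp' : p = (ContinuousLinearMap.adjoint C) x := hp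
      have hCx : C (w - p) = C w - (C ∘L ContinuousLinearMap.adjoint C) x := by
        simp [map_sub, hp', ContinuousLinearMap.comp_apply]
      have : x = J (C w) := hJuniq (C w) x (by rwa [hCx] at hx)
      rw [hp', this]
    · rintro rfl
      refine ⟨J (C w), ?_, rfl⟩
      have : C (w - (ContinuousLinearMap.adjoint C) (J (C w)))
          = C w - (C ∘L ContinuousLinearMap.adjoint C) (J (C w)) := by
        simp [map_sub, ContinuousLinearMap.comp_apply]
      rw [this]
      exact hJ (C w)
  refine ⟨mono, ?_, res, ?_⟩
  · -- maximality
    intro p hp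
    set w := p.1 + p.2 with hw
    set r := (ContinuousLinearMap.adjoint C) (J (C w)) with hr
    have hrCA : (r, w - r) ∈ CA := (res w r).2 rfl
    have h0 := hp (r, w - r) hrCA
    have e : p.2 - (w - r) = -(p.1 - r) := by simp [hw]; abel
    rw [e, inner_neg_left] at h0
    have h1 : (inner ℝ (p.1 - r) (p.1 - r) : ℝ) ≤ 0 := by linarith
    have h2 : p.1 - r = 0 := by
      have := real_inner_self_nonneg (x := p.1 - r)
      exact inner_self_eq_zero.mp (le_antisymm h1 this)
    have hp1 : p.1 = r := by rwa [sub_eq_zero] at h2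
    have hp2 : p.2 = w - r := by rw [hw, hp1]; abel
    have : p = (r, w - r) := Prod.ext hp1 hp2
    rw [this]; exact hrCA
  · -- firm nonexpansiveness
    intro w₁ w₂
    set r₁ := (ContinuousLinearMap.adjoint C) (J (C w₁)) with hr₁
    set r₂ := (ContinuousLinearMap.adjoint C) (J (C w₂)) with hr₂
    have h₁ : (r₁, w₁ - r₁) ∈ CA := (res w₁ r₁).2 rfl
    have h₂ : (r₂, w₂ - r₂) ∈ CA := (res w₂ r₂).2 rfl
    have hm := mono (r₁, w₁ - r₁) h₁ (r₂, w₂ - r₂) h₂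
    simp only at hm
    have expand : ‖w₁ - w₂‖ ^ 2 = ‖r₁ - r₂‖ ^ 2 + ‖(w₁ - r₁) - (w₂ - r₂)‖ ^ 2
        + 2 * (inner ℝ ((w₁ - r₁) - (w₂ - r₂)) (r₁ - r₂) : ℝ) := by
      have e : w₁ - w₂ = (r₁ - r₂) + ((w₁ - r₁) - (w₂ - r₂)) := by abel
      rw [e, norm_add_sq_real, real_inner_comm]
      ring
    linarith
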